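/- Let A be a Banach algebra with unit, a1, a2 ∈ A, and let f1(t) = Σ_{n≥0} φ(a1^n) t^n, f2(t) = Σ φ(a2^n) t^n be the moment series (convergent near 0, with f1(0) = f2(0) = 1). Then there exist germs of holomorphic functions t ↦ t1(t), t ↦ t2(t) near 0 with t1(0) = t2(0) = 0, t1'(0) = t2'(0) = 1, such that t1 f1(t1) = t2 f2(t2) and t = t1 f1(t1)/(f1(t1) + f2(t2) − 1) for all t near 0; moreover ρ(t) := (f1(t1(t)) f2(t2(t)))^{-1} → 1 as t → 0, so |ρ(t)| < 2 for t sufficiently close to 0. -/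

import Mathlib

open Filter Topology

open Filter Topology

/-- Analytic local inverse for a map `ℂ → ℂ` with first-order jet `(0,1)` at `0`. -/
lemma analytic_local_inverse (g : ℂ → ℂ) (hg : AnalyticAt ℂ g 0) (hg0 : g 0 = 0)
    (hg1 : deriv g 0 = 1) :
    ∃ h : ℂ → ℂ, AnalyticAt ℂ h 0 ∧ h 0 = 0 ∧ deriv h 0 = 1 ∧
      (∀ᶠ u in 𝓝 (0:ℂ), h (g u) = u) ∧ (∀ᶠ t in 𝓝 (0:ℂ), g (h t) = t) := by
  have hfd : fderiv ℂ g 0 = (ContinuousLinearEquiv.refl ℂ ℂ : ℂ →L[ℂ] ℂ) := by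
    apply ContinuousLinearMap.ext_ring
    simp [fderiv_apply_one_eq_deriv, hg1]
  have hs : HasStrictFDerivAt g
      ((ContinuousLinearEquiv.refl ℂ ℂ : ℂ ≃L[ℂ] ℂ) : ℂ →L[ℂ] ℂ) 0 :=
    hfd ▸ hg.hasStrictFDerivAt
  set F := hs.toOpenPartialHomeomorph g with hFdef
  have hF : ⇑F = g := hs.toOpenPartialHomeomorph_coe
  have hmem : (0:ℂ) ∈ F.source := hs.mem_toOpenPartialHomeomorph_source
  have hF0 : F 0 = 0 := by rw [hF, hg0]
  refine ⟨F.symm, ?_, ?_, ?_, ?_, ?_⟩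
  · have := F.analyticAt_symm' (i := ContinuousLinearEquiv.refl ℂ ℂ) hmem
      (by rw [hF]; exact hg) (by rw [hF]; exact hfd)
    rwa [hF0] at this
  · have := F.left_inv hmem
    rwa [hF0] at this
  · have hgs : HasStrictDerivAt g 1 0 := by
      obtain ⟨p, hp⟩ := hg
      have := hp.hasStrictDerivAt
      rwa [← hp.deriv, hg1] at this
    have hleft : ∀ᶠ x in 𝓝 (0:ℂ), F.symm (g x) = x := by
      filter_upwards [F.eventually_left_inverse hmem] with x hx
      rwa [hF] at hx
    have := hgs.to_local_left_inverse one_ne_zero hleft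
    rw [hg0] at this
    simpa using this.hasDerivAt.deriv
  · filter_upwards [F.eventually_left_inverse hmem] with x hx
    rwa [hF] at hx
  · have := F.eventually_right_inverse' hmem
    rw [hF0] at this
    filter_upwards [this] with y hy
    rwa [hF] at hy
open Filter Topology

lemma moment_analytic {A : Type*} [NormedRing A] [NormedAlgebra ℂ A] [CompleteSpace A]
    (φ : A →L[ℂ] ℂ) (a : A) :
    AnalyticAt ℂ (fun t : ℂ => φ (Ring.inverse (1 - t • a))) 0 := by
  have h1 : AnalyticAt ℂ (fun t : ℂ => (1 : A) - t • a) 0 :=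
    analyticAt_const.sub (analyticAt_id.smul analyticAt_const)
  have h2 : AnalyticAt ℂ (Ring.inverse : A → A) ((fun t : ℂ => (1 : A) - t • a) 0) := by
    simpa using analyticAt_inverse (1 : Aˣ)
  exact (φ.analyticAt _).comp
    (AnalyticAt.comp (f := fun t : ℂ => (1 : A) - t • a) (g := (Ring.inverse : A → A)) h2 h1)

/-- Lemma 2.11(b) of Voiculescu's "Free Probability for Pairs of Faces II": for the moment
series `f_j(t) = φ((1 − t a_j)⁻¹)` of elements of a unital Banach algebra (so `f_j(0) = 1`),
there exist holomorphic germs `t ↦ t_1(t), t_2(t)` at `0`, with first-order jet `(0,1)`,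
such that `t_1 f_1(t_1) = t_2 f_2(t_2)` and `t = t_1 f_1(t_1)/(f_1(t_1) + f_2(t_2) − 1)`
near `0`; moreover `ρ(t) = (f_1(t_1(t)) f_2(t_2(t)))⁻¹ → 1` as `t → 0`, so `|ρ(t)| < 2`
for `t` close to `0`. -/
theorem stmt9 {A : Type*} [NormedRing A] [NormedAlgebra ℂ A] [CompleteSpace A]
    (φ : A →L[ℂ] ℂ) (hφ1 : φ 1 = 1) (a1 a2 : A)
    (f1 f2 : ℂ → ℂ)
    (hf1 : f1 = fun t => φ (Ring.inverse (1 - t • a1)))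
    (hf2 : f2 = fun t => φ (Ring.inverse (1 - t • a2))) :
    ∃ t1 t2 : ℂ → ℂ, AnalyticAt ℂ t1 0 ∧ AnalyticAt ℂ t2 0 ∧
      t1 0 = 0 ∧ t2 0 = 0 ∧ deriv t1 0 = 1 ∧ deriv t2 0 = 1 ∧
      (∀ᶠ t in nhds (0 : ℂ),
        t1 t * f1 (t1 t) = t2 t * f2 (t2 t) ∧
        t = t1 t * f1 (t1 t) / (f1 (t1 t) + f2 (t2 t) - 1)) ∧
      Tendsto (fun t => (f1 (t1 t) * f2 (t2 t))⁻¹) (nhds 0) (nhds 1) ∧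
      (∀ᶠ t in nhds (0 : ℂ), ‖(f1 (t1 t) * f2 (t2 t))⁻¹‖ < 2) := by
  -- analyticity and values of the moment series
  have hf1a : AnalyticAt ℂ f1 0 := hf1 ▸ moment_analytic φ a1
  have hf2a : AnalyticAt ℂ f2 0 := hf2 ▸ moment_analytic φ a2
  have hf10 : f1 0 = 1 := by simp [hf1, hφ1]
  have hf20 : f2 0 = 1 := by simp [hf2, hφ1]
  -- the functions G_j(u) = u f_j(u)
  set G1 : ℂ → ℂ := fun u => u * f1 u with hG1def
  set G2 : ℂ → ℂ := fun u => u * f2 u with hG2def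
  have hG1a : AnalyticAt ℂ G1 0 := analyticAt_id.mul hf1a
  have hG2a : AnalyticAt ℂ G2 0 := analyticAt_id.mul hf2a
  have hG10 : G1 0 = 0 := by simp [hG1def]
  have hG20 : G2 0 = 0 := by simp [hG2def]
  have hG1d : HasDerivAt G1 1 0 := by
    have := (hasDerivAt_id (0:ℂ)).mul (hf1a.differentiableAt.hasDerivAt)
    simp only [id_eq, hf10, one_mul, zero_mul, add_zero] at this
    exact this
  have hG2d : HasDerivAt G2 1 0 := by
    have := (hasDerivAt_id (0:ℂ)).mul (hf2a.differentiableAt.hasDerivAt)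
    simp only [id_eq, hf20, one_mul, zero_mul, add_zero] at this
    exact this
  -- invert G2
  obtain ⟨H2, hH2a, hH20, hH2deriv, hH2l, hH2r⟩ :=
    analytic_local_inverse G2 hG2a hG20 hG2d.deriv
  have hH2d : HasDerivAt H2 1 0 := by
    have := hH2a.differentiableAt.hasDerivAt
    rwa [hH2deriv] at this
  -- T2 u := H2 (G1 u), the second coordinate as a function of the first
  set T2 : ℂ → ℂ := fun u => H2 (G1 u) with hT2def
  have hT2a : AnalyticAt ℂ T2 0 := (hG10 ▸ hH2a).comp hG1a
  have hT20 : T2 0 = 0 := by simp [hT2def, hG10, hH20]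
  have hT2d : HasDerivAt T2 1 0 := by
    have := HasDerivAt.comp (x := (0:ℂ)) (hG10 ▸ hH2d) hG1d
    simp only [mul_one] at this
    exact this
  -- the denominator D and the map ψ
  set D : ℂ → ℂ := fun u => f1 u + f2 (T2 u) - 1 with hDdef
  have hDa : AnalyticAt ℂ D 0 := (hf1a.add ((hT20 ▸ hf2a).comp hT2a)).sub analyticAt_const
  have hD0 : D 0 = 1 := by simp [hDdef, hf10, hT20, hf20]
  set ψ : ℂ → ℂ := fun u => G1 u / D u with hψdef
  have hψa : AnalyticAt ℂ ψ 0 := hG1a.div hDa (by rw [hD0]; exact one_ne_zero)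
  have hψ0 : ψ 0 = 0 := by simp [hψdef, hG10]
  have hψd : HasDerivAt ψ 1 0 := by
    have := hG1d.div (hDa.differentiableAt.hasDerivAt) (by rw [hD0]; exact one_ne_zero)
    simp only [hD0, hG10, one_mul, zero_mul, sub_zero, one_pow, div_one] at this
    exact this
  -- invert ψ
  obtain ⟨τ, hτa, hτ0, hτderiv, hτl, hτr⟩ :=
    analytic_local_inverse ψ hψa hψ0 hψd.deriv
  have hτd : HasDerivAt τ 1 0 := by
    have := hτa.differentiableAt.hasDerivAt
    rwa [hτderiv] at this
  refine ⟨τ, fun t => T2 (τ t), hτa, (hτ0 ▸ hT2a).comp hτa, hτ0, by simp [hτ0, hT20],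
    hτderiv, ?_, ?_, ?_, ?_⟩
  · have := HasDerivAt.comp (x := (0:ℂ)) (hτ0 ▸ hT2d) hτd
    have h := this.deriv
    simp only [mul_one] at h
    exact h
  · -- the two functional equations
    have hcont : Tendsto (fun t => G1 (τ t)) (𝓝 0) (𝓝 0) := by
      have h1 : Tendsto τ (𝓝 0) (𝓝 0) := by
        have := hτa.continuousAt.tendsto; rwa [hτ0] at this
      have h2 : Tendsto G1 (𝓝 0) (𝓝 0) := by
        have := hG1a.continuousAt.tendsto; rwa [hG10] at this
      exact h2.comp h1
    filter_upwards [hτr, hcont.eventually hH2r] with t h1 h2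
    constructor
    · exact h2.symm
    · exact h1.symm
  · -- the limit of (f1(t1) f2(t2))⁻¹
    have h1 : Tendsto τ (𝓝 0) (𝓝 0) := by
      have := hτa.continuousAt.tendsto; rwa [hτ0] at this
    have hT2t : Tendsto T2 (𝓝 0) (𝓝 0) := by
      have := hT2a.continuousAt.tendsto; rwa [hT20] at this
    have h2 : Tendsto (fun t => T2 (τ t)) (𝓝 0) (𝓝 0) := hT2t.comp h1
    have hf1t : Tendsto f1 (𝓝 0) (𝓝 1) := by
      have := hf1a.continuousAt.tendsto; rwa [hf10] at this
    have h3 : Tendsto (fun t => f1 (τ t)) (𝓝 0) (𝓝 1) := hf1t.comp h1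
    have hf2t : Tendsto f2 (𝓝 0) (𝓝 1) := by
      have := hf2a.continuousAt.tendsto; rwa [hf20] at this
    have h4 : Tendsto (fun t => f2 (T2 (τ t))) (𝓝 0) (𝓝 1) := hf2t.comp h2
    have := (h3.mul h4).inv₀ (by norm_num)
    simpa using this
  · -- eventually |ρ| < 2
    have h1 : Tendsto τ (𝓝 0) (𝓝 0) := by
      have := hτa.continuousAt.tendsto; rwa [hτ0] at this
    have hT2t : Tendsto T2 (𝓝 0) (𝓝 0) := by
      have := hT2a.continuousAt.tendsto; rwa [hT20] at this
    have h2 : Tendsto (fun t => T2 (τ t)) (𝓝 0) (𝓝 0) := hT2t.comp h1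
    have hf1t : Tendsto f1 (𝓝 0) (𝓝 1) := by
      have := hf1a.continuousAt.tendsto; rwa [hf10] at this
    have h3 : Tendsto (fun t => f1 (τ t)) (𝓝 0) (𝓝 1) := hf1t.comp h1
    have hf2t : Tendsto f2 (𝓝 0) (𝓝 1) := by
      have := hf2a.continuousAt.tendsto; rwa [hf20] at this
    have h4 : Tendsto (fun t => f2 (T2 (τ t))) (𝓝 0) (𝓝 1) := hf2t.comp h2
    have h5 : Tendsto (fun t => (f1 (τ t) * f2 (T2 (τ t)))⁻¹) (𝓝 0) (𝓝 1) := by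
      have := (h3.mul h4).inv₀ (by norm_num)
      simpa using this
    have hopen : IsOpen {z : ℂ | ‖z‖ < 2} :=
      isOpen_lt continuous_norm continuous_const
    have hmem2 : {z : ℂ | ‖z‖ < 2} ∈ 𝓝 (1:ℂ) :=
      hopen.mem_nhds (by norm_num)
    exact h5.eventually (eventually_mem_set.2 hmem2)
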